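/- For any fixed sequence of transition matrices χ = (B(1), B(2), …, B(t)) and the random walk of the Correlated Random Walk Process starting at node u, one has E[ q̃^(u)(t) | χ ] = R(t)·e^(u) and E[ W̃^(u)(t) | χ ] = W^(u)(t), where R(t) = B(t)B(t−1)···B(1). -/

import Mathlib

open MeasureTheory ProbabilityTheory Finset

instance finsetFinMeasurableSpace (n : ℕ) : MeasurableSpace (Finset (Fin n)) := ⊤

/-- A step of the Node Model: selected node together with the selected set of neighbours. -/
abbrev NodeStep (n : ℕ) := Fin n × Finset (Fin n)

/-- Distribution of a single step of the Node Model: a uniformly random node `u`,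
together with a uniformly random set of `k` of its neighbours. -/
noncomputable def nodeStepPMF {n : ℕ} (G : SimpleGraph (Fin n)) [DecidableRel G.Adj]
    (hn : Nonempty (Fin n)) (k : ℕ) (hk : ∀ u, k ≤ G.degree u) : PMF (NodeStep n) :=
  letI := hn
  (PMF.uniformOfFintype (Fin n)).bind fun u =>
    (PMF.uniformOfFinset ((G.neighborFinset u).powersetCard k)
      (Finset.powersetCard_nonempty.2 (hk u))).map fun S => (u, S)

/-- One update of the Node Model: the selected node `s.1` replaces its value by an
`α`-fraction of its own value plus a `(1-α)/k`-fraction of the values of the selected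
neighbours `s.2`. -/
noncomputable def nodeUpdate {n : ℕ} (α : ℝ) (k : ℕ) (s : NodeStep n) (ξ : Fin n → ℝ) :
    Fin n → ℝ :=
  fun w => if w = s.1 then α * ξ w + ((1 - α) / k) * ∑ v ∈ s.2, ξ v else ξ w

/-- The trajectory of node values of the Node Model, given the sequence of step choices. -/
noncomputable def nodeTraj {n : ℕ} (α : ℝ) (k : ℕ) (ξ0 : Fin n → ℝ)
    (ω : ℕ → NodeStep n) : ℕ → Fin n → ℝ
  | 0 => ξ0
  | t + 1 => nodeUpdate α k (ω t) (nodeTraj α k ξ0 ω t)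

/-- Stationary distribution of the lazy random walk: `π u = d_u / (2m)`. -/
noncomputable def piRW {n : ℕ} (G : SimpleGraph (Fin n)) [DecidableRel G.Adj] (u : Fin n) : ℝ :=
  (G.degree u : ℝ) / (2 * (G.edgeFinset.card : ℝ))

/-- The potential `φ(ξ) = (1/2) Σ_{u,v} π_u π_v (ξ_u - ξ_v)²`. -/
noncomputable def phi {n : ℕ} (G : SimpleGraph (Fin n)) [DecidableRel G.Adj]
    (ξ : Fin n → ℝ) : ℝ :=
  (1 / 2) * ∑ u, ∑ v, piRW G u * piRW G v * (ξ u - ξ v) ^ 2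

/-- Transition matrix of the lazy random walk on `G`. -/
noncomputable def lazyP {n : ℕ} (G : SimpleGraph (Fin n)) [DecidableRel G.Adj] :
    Matrix (Fin n) (Fin n) ℝ :=
  Matrix.of fun i j =>
    if i = j then 1 / 2 else if G.Adj i j then 1 / (2 * (G.degree i : ℝ)) else 0

/-- `lam` is the second-largest eigenvalue of the (reversible) lazy random-walk matrix `P`:
it is the largest eigenvalue attained on the space of vectors `π`-orthogonal to `1`. -/
def IsSecondEigenvalueP {n : ℕ} (G : SimpleGraph (Fin n)) [DecidableRel G.Adj]
    (lam : ℝ) : Prop :=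
  (∃ f : Fin n → ℝ, f ≠ 0 ∧ (lazyP G).mulVec f = lam • f ∧ ∑ x, piRW G x * f x = 0) ∧
  ∀ lam' : ℝ,
    (∃ f : Fin n → ℝ, f ≠ 0 ∧ (lazyP G).mulVec f = lam' • f ∧ ∑ x, piRW G x * f x = 0) →
      lam' ≤ lam

/-- The matrix `B(s)` of one diffusion step with step choice `s = (u, S)`:
`B_{ii} = 1` for `i ≠ u`, `B_{uu} = α`, `B_{i,u} = (1-α)/k` for `i ∈ S`, and `0` otherwise. -/
noncomputable def Bmat {n : ℕ} (α : ℝ) (k : ℕ) (s : NodeStep n) :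
    Matrix (Fin n) (Fin n) ℝ :=
  Matrix.of fun i j =>
    if j = s.1 then (if i = s.1 then α else if i ∈ s.2 then (1 - α) / k else 0)
    else if i = j then 1 else 0

/-- The product `R(t) = B(t) B(t-1) ⋯ B(1)` of the diffusion-step matrices, where the step
at time `t` uses the choice `ω (t-1)`. -/
noncomputable def Rmat {n : ℕ} (α : ℝ) (k : ℕ) (ω : ℕ → NodeStep n) :
    ℕ → Matrix (Fin n) (Fin n) ℝ
  | 0 => 1
  | t + 1 => Bmat α k (ω t) * Rmat α k ω t

/-- The cost vector `W(t) = ξ(0)ᵀ R(t)` of the Diffusion Process applied to the cost vector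
`ξ(0)ᵀ` and the initial load vectors `e^(u)`, `u ∈ V`. -/
noncomputable def Wcost {n : ℕ} (α : ℝ) (k : ℕ) (ξ0 : Fin n → ℝ) (ω : ℕ → NodeStep n)
    (t : ℕ) : Fin n → ℝ :=
  Matrix.vecMul ξ0 (Rmat α k ω t)
/-- **Lemma 3 (random walk vs. diffusion, fixed matrix sequence).**
Fix a sequence `χ` of step choices (equivalently, of transition matrices `B(1), B(2), …`).
Let `X` be the random walk of the Correlated Random Walk Process starting at node `u`: it
starts at `u` (first hypothesis) and, at step `t+1`, moves according to the matrix
`B(χ(t))`, i.e. `P(X(t+1) = y, X(t) = x) = B(χ t)_{y,x} · P(X(t) = x)` (second hypothesis).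
Then `E[q̃^(u)(t) | χ] = R(t) e^(u)` — the law of `X(t)` is the `u`-th column of `R(t)` —
and `E[W̃^(u)(t) | χ] = W^(u)(t)`, where `W̃^(u)(t) = ξ(0)ᵀ q̃^(u)(t)`. -/
theorem correlated_walk_expectation_fixed_sequence {n : ℕ} (G : SimpleGraph (Fin n))
    [DecidableRel G.Adj] (α : ℝ) (hα : α ∈ Set.Ioo (0 : ℝ) 1)
    (k : ℕ) (hk1 : 1 ≤ k) (ξ0 : Fin n → ℝ)
    (χ : ℕ → NodeStep n)
    (hfeas : ∀ t, (χ t).2 ⊆ G.neighborFinset (χ t).1 ∧ (χ t).2.card = k)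
    (u : Fin n)
    (Ω : Type) (mΩ : MeasurableSpace Ω) (Pr : Measure Ω) (hPr : IsProbabilityMeasure Pr)
    (X : ℕ → Ω → Fin n) (hmeas : ∀ t, Measurable (X t))
    (hX0 : Pr {ω | X 0 ω = u} = 1)
    (hXstep : ∀ (t : ℕ) (x y : Fin n),
      Pr {ω | X (t + 1) ω = y ∧ X t ω = x} =
        ENNReal.ofReal (Bmat α k (χ t) y x) * Pr {ω | X t ω = x}) :
    (∀ (t : ℕ) (y : Fin n),
        Pr {ω | X t ω = y} = ENNReal.ofReal (Rmat α k χ t y u)) ∧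
    (∀ t : ℕ, ∫ ω, ξ0 (X t ω) ∂Pr = Wcost α k ξ0 χ t u) := by

  have hBnn : ∀ t (i j : Fin n), 0 ≤ Bmat α k (χ t) i j := by
    intro t i j
    obtain ⟨hα0, hα1⟩ := hα
    unfold Bmat
    simp only [Matrix.of_apply]
    split_ifs <;>
      first
        | exact hα0.le
        | exact div_nonneg (by linarith) (Nat.cast_nonneg k)
        | norm_num
  have hRnn : ∀ t (i j : Fin n), 0 ≤ Rmat α k χ t i j := by
    intro t
    induction t with
    | zero =>
      intro i j
      simp [Rmat, Matrix.one_apply]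
      split_ifs <;> norm_num
    | succ t ih =>
      intro i j
      show 0 ≤ (Bmat α k (χ t) * Rmat α k χ t) i j
      rw [Matrix.mul_apply]
      exact Finset.sum_nonneg fun x _ => mul_nonneg (hBnn t i x) (ih x j)
  have hmeasSet : ∀ t y, MeasurableSet {ω | X t ω = y} := by
    intro t y
    exact (hmeas t) (measurableSet_singleton y)
  have hlaw : ∀ t (y : Fin n), Pr {ω | X t ω = y} = ENNReal.ofReal (Rmat α k χ t y u) := by
    intro t
    induction t with
    | zero =>
      intro y
      by_cases hy : y = u
      · subst hy
        simp [Rmat, Matrix.one_apply, hX0]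
      · have hsub : {ω | X 0 ω = y} ⊆ {ω | X 0 ω = u}ᶜ := by
          intro ω hω hω'
          exact hy (hω.symm ▸ hω' ▸ rfl)
        have hc : Pr {ω | X 0 ω = u}ᶜ = 0 := by
          rw [measure_compl (hmeasSet 0 u) (measure_ne_top Pr _), hX0, measure_univ,
            tsub_self]
        have : Pr {ω | X 0 ω = y} = 0 := measure_mono_null hsub hc
        simp [this, Rmat, Matrix.one_apply, hy]
    | succ t ih =>
      intro y
      have hdecomp : {ω | X (t+1) ω = y} = ⋃ x, {ω | X (t+1) ω = y ∧ X t ω = x} := by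
        ext ω; simp
      have hdisj : Pairwise (Function.onFun Disjoint
          fun x => {ω | X (t+1) ω = y ∧ X t ω = x}) := by
        intro a b hab
        refine Set.disjoint_left.2 fun ω h1 h2 => hab ?_
        rw [← h1.2, h2.2]
      have hms : ∀ x : Fin n, MeasurableSet {ω | X (t+1) ω = y ∧ X t ω = x} := by
        intro x
        exact (hmeasSet (t+1) y).inter (hmeasSet t x)
      rw [hdecomp, measure_iUnion hdisj hms, tsum_fintype]
      have : ∀ x : Fin n, Pr {ω | X (t+1) ω = y ∧ X t ω = x} =
          ENNReal.ofReal (Bmat α k (χ t) y x * Rmat α k χ t x u) := by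
        intro x
        rw [hXstep t x y, ih x, ← ENNReal.ofReal_mul (hBnn t y x)]
      rw [Finset.sum_congr rfl fun x _ => this x,
        ← ENNReal.ofReal_sum_of_nonneg
          (fun x _ => mul_nonneg (hBnn t y x) (hRnn t x u))]
      congr 1
  refine ⟨hlaw, ?_⟩
  intro t
  have hfun : (fun ω => ξ0 (X t ω)) =
      fun ω => ∑ y, Set.indicator {ω' | X t ω' = y} (fun _ => ξ0 y) ω := by
    funext ω
    rw [Finset.sum_eq_single (X t ω)]
    · simp [Set.indicator_of_mem, Set.mem_setOf_eq]
    · intro b _ hb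
      exact Set.indicator_of_notMem (fun h => hb (h.symm)) _
    · intro h
      exact absurd (Finset.mem_univ _) h
  rw [hfun, integral_finset_sum]
  · have : ∀ y : Fin n,
        ∫ ω, Set.indicator {ω' | X t ω' = y} (fun _ => ξ0 y) ω ∂Pr =
          Rmat α k χ t y u * ξ0 y := by
      intro y
      rw [MeasureTheory.integral_indicator_const _ (hmeasSet t y), measureReal_def, hlaw t y,
        ENNReal.toReal_ofReal (hRnn t y u), smul_eq_mul]
    rw [Finset.sum_congr rfl fun y _ => this y]
    unfold Wcost
    rw [Matrix.vecMul, dotProduct]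
    exact Finset.sum_congr rfl fun y _ => mul_comm _ _
  · intro y _
    exact (integrable_const (ξ0 y)).indicator (hmeasSet t y)
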